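/- For the standard normal CDF Φ and fixed d > 0, the function t ↦ Φ(d−t)/Φ(−t), the ratio of upper-tail probabilities of N(d,1) and N(0,1) at threshold t, is strictly increasing in t and tends to +∞ as t → +∞. -/

import Mathlib

open MeasureTheory ProbabilityTheory Filter

/-- The standard normal cumulative distribution function. -/
noncomputable def stdNormalCDF (x : ℝ) : ℝ := (gaussianReal 0 1 (Set.Iic x)).toReal

namespace TailRatioAux

noncomputable def phi : ℝ → ℝ := gaussianPDFReal 0 1

lemma continuous_phi : Continuous phi := by
  unfold phi
  rw [gaussianPDFReal_def]
  fun_prop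

lemma stdNormalCDF_eq (x : ℝ) : stdNormalCDF x = ∫ y in Set.Iic x, phi y := by
  rw [stdNormalCDF, gaussianReal_apply_eq_integral 0 one_ne_zero,
    ENNReal.toReal_ofReal (integral_nonneg fun y => gaussianPDFReal_nonneg 0 1 y)]
  rfl

lemma phi_pos (x : ℝ) : 0 < phi x := gaussianPDFReal_pos 0 1 x one_ne_zero

lemma integrable_phi : Integrable phi := integrable_gaussianPDFReal 0 1

lemma phi_eq_gauss (d : ℝ) : (fun y => phi (y + d)) = gaussianPDFReal (-d) 1 := by
  funext y
  unfold phi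
  rw [gaussianPDFReal_add]
  norm_num

lemma stdNormalCDF_pos (x : ℝ) : 0 < stdNormalCDF x := by
  rw [stdNormalCDF_eq]
  rw [setIntegral_pos_iff_support_of_nonneg_ae
    (Filter.Eventually.of_forall fun y => (phi_pos y).le) integrable_phi.integrableOn]
  have : Function.support phi ∩ Set.Iic x = Set.Iic x := by
    ext y; simp [Function.support, (phi_pos y).ne']
  rw [this]
  simp [Real.volume_Iic]

lemma hasDerivAt_stdNormalCDF (x : ℝ) : HasDerivAt stdNormalCDF (phi x) x := by
  have key : ∀ u : ℝ, stdNormalCDF u = (∫ y in Set.Iic (0:ℝ), phi y) + ∫ y in (0:ℝ)..u, phi y := by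
    intro u
    rw [stdNormalCDF_eq, ← intervalIntegral.integral_Iic_sub_Iic
      integrable_phi.integrableOn integrable_phi.integrableOn]
    ring
  have h := intervalIntegral.integral_hasDerivAt_right
    (f := phi) (a := (0:ℝ)) (b := x) integrable_phi.intervalIntegrable
    continuous_phi.stronglyMeasurable.stronglyMeasurableAtFilter
    continuous_phi.continuousAt
  have h2 := h.const_add (∫ y in Set.Iic (0:ℝ), phi y)
  rw [show stdNormalCDF = fun u => _ from funext key]
  exact h2

/-- The key pointwise relation: `φ(y + d) = φ(y) * exp(-d*y - d²/2)`. -/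
lemma phi_add (d y : ℝ) : phi (y + d) = phi y * Real.exp (-(d*y) - d^2/2) := by
  unfold phi
  simp only [gaussianPDFReal, NNReal.coe_one, mul_one, sub_zero]
  rw [mul_assoc, ← Real.exp_add]
  congr 1
  ring

lemma phi_neg (t : ℝ) : phi (-t) = phi t := by
  unfold phi
  simp only [gaussianPDFReal, NNReal.coe_one, mul_one, sub_zero]
  congr 1
  ring

lemma phi_shift (d t : ℝ) : phi (d - t) = phi t * Real.exp (d * t - d^2/2) := by
  have h := phi_add d (-t)
  rw [neg_add_eq_sub, phi_neg] at h
  rw [h]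
  congr 1
  ring

lemma stdNormalCDF_shift (d t : ℝ) :
    stdNormalCDF (d - t) = ∫ y in Set.Iic (-t), phi (y + d) := by
  have hmap : Measure.map (· + (-d)) (gaussianReal 0 1) = gaussianReal (-d) 1 := by
    simpa using gaussianReal_map_add_const (μ := 0) (v := 1) (-d)
  have h1 : gaussianReal 0 1 (Set.Iic (d - t)) = gaussianReal (-d) 1 (Set.Iic (-t)) := by
    rw [← hmap, Measure.map_apply (by fun_prop) measurableSet_Iic]
    congr 1
    ext y
    simp only [Set.mem_preimage, Set.mem_Iic]
    constructor <;> intro h <;> linarith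
  rw [stdNormalCDF, h1, gaussianReal_apply_eq_integral _ one_ne_zero,
    ENNReal.toReal_ofReal (integral_nonneg fun y => gaussianPDFReal_nonneg _ _ y)]
  rw [show (fun y => phi (y + d)) = gaussianPDFReal (-d) 1 from phi_eq_gauss d]

/-- Key inequality: `Φ(d - t) > exp(d t - d²/2) Φ(-t)` for `d > 0`. -/
lemma key_ineq (d : ℝ) (hd : 0 < d) (t : ℝ) :
    Real.exp (d * t - d^2/2) * stdNormalCDF (-t) < stdNormalCDF (d - t) := by
  set c := Real.exp (d * t - d^2/2) with hc
  rw [stdNormalCDF_shift, stdNormalCDF_eq]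
  have hint : Integrable (fun y => phi (y + d)) := by
    rw [phi_eq_gauss]; exact integrable_gaussianPDFReal _ _
  rw [← sub_pos, ← integral_const_mul, ← integral_sub hint.integrableOn
    ((integrable_phi.const_mul c).integrableOn)]
  set g : ℝ → ℝ := fun y => phi (y + d) - c * phi y with hg
  have hgpos : ∀ y < -t, 0 < g y := by
    intro y hy
    simp only [hg, sub_pos, phi_add]
    have hlt : c < Real.exp (-(d*y) - d^2/2) := by
      apply Real.exp_lt_exp.mpr
      have : d * y < d * (-t) := mul_lt_mul_of_pos_left hy hd
      nlinarith
    calc c * phi y < Real.exp (-(d*y) - d^2/2) * phi y :=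
          mul_lt_mul_of_pos_right hlt (phi_pos y)
      _ = phi y * Real.exp (-(d*y) - d^2/2) := mul_comm _ _
  have hgnn : ∀ y ∈ Set.Iic (-t), 0 ≤ g y := by
    intro y hy
    simp only [hg, sub_nonneg, phi_add]
    have hle : c ≤ Real.exp (-(d*y) - d^2/2) := by
      apply Real.exp_le_exp.mpr
      have : d * y ≤ d * (-t) := mul_le_mul_of_nonneg_left hy hd.le
      nlinarith
    calc c * phi y ≤ Real.exp (-(d*y) - d^2/2) * phi y :=
          mul_le_mul_of_nonneg_right hle (phi_pos y).le
      _ = phi y * Real.exp (-(d*y) - d^2/2) := mul_comm _ _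
  have hgint : IntegrableOn g (Set.Iic (-t)) volume := by
    exact (hint.sub (integrable_phi.const_mul c)).integrableOn
  have hgae : 0 ≤ᵐ[volume.restrict (Set.Iic (-t))] g := by
    filter_upwards [ae_restrict_mem measurableSet_Iic] with y hy using hgnn y hy
  rw [show (∫ y in Set.Iic (-t), (phi (y + d) - c * phi y)) = ∫ y in Set.Iic (-t), g y from rfl,
    setIntegral_pos_iff_support_of_nonneg_ae hgae hgint]
  have hsub : Set.Iio (-t) ⊆ Function.support g ∩ Set.Iic (-t) := fun y hy =>
    ⟨(hgpos y hy).ne', Set.mem_Iic.mpr (le_of_lt hy)⟩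
  calc (0:ENNReal) < volume (Set.Iio (-t)) := by rw [Real.volume_Iio]; simp
    _ ≤ _ := measure_mono hsub

lemma hasDerivAt_ratio (d : ℝ) (t : ℝ) :
    HasDerivAt (fun t : ℝ => stdNormalCDF (d - t) / stdNormalCDF (-t))
      ((-phi (d - t) * stdNormalCDF (-t) - stdNormalCDF (d - t) * (-phi (-t))) /
        (stdNormalCDF (-t))^2) t := by
  have h1 : HasDerivAt (fun t : ℝ => stdNormalCDF (d - t)) (-phi (d - t)) t := by
    have := (hasDerivAt_stdNormalCDF (d - t)).comp t ((hasDerivAt_id t).const_sub d)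
    simpa [Function.comp_def] using this
  have h2 : HasDerivAt (fun t : ℝ => stdNormalCDF (-t)) (-phi (-t)) t := by
    have := (hasDerivAt_stdNormalCDF (-t)).comp t (hasDerivAt_neg t)
    simpa [Function.comp_def] using this
  exact h1.div h2 (stdNormalCDF_pos (-t)).ne'

end TailRatioAux

open TailRatioAux in
/-- For fixed `d > 0`, the ratio of the upper-tail probabilities of `N(d,1)` and `N(0,1)`,
`t ↦ Φ(d−t)/Φ(−t)`, is strictly increasing in `t` and tends to `+∞` as `t → +∞`. -/
theorem tail_ratio_strictMono_and_tendsto_atTop (d : ℝ) (hd : 0 < d) :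
    StrictMono (fun t : ℝ => stdNormalCDF (d - t) / stdNormalCDF (-t)) ∧
    Tendsto (fun t : ℝ => stdNormalCDF (d - t) / stdNormalCDF (-t)) atTop atTop := by
  constructor
  · apply strictMono_of_deriv_pos
    intro t
    rw [(hasDerivAt_ratio d t).deriv]
    apply div_pos _ (pow_pos (stdNormalCDF_pos (-t)) 2)
    have hkey := key_ineq d hd t
    have h1 : -phi (d - t) * stdNormalCDF (-t) - stdNormalCDF (d - t) * (-phi (-t)) =
        phi t * (stdNormalCDF (d - t) - Real.exp (d * t - d^2/2) * stdNormalCDF (-t)) := by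
      rw [phi_shift d t, phi_neg]; ring
    rw [h1]
    exact mul_pos (phi_pos t) (by linarith)
  · apply tendsto_atTop_mono (f := fun t => Real.exp (d * t - d^2/2))
    · intro t
      have hkey := key_ineq d hd t
      have hg := stdNormalCDF_pos (-t)
      rw [le_div_iff₀ hg]
      exact hkey.le
    · apply Real.tendsto_exp_atTop.comp
      apply tendsto_atTop_add_const_right
      exact (tendsto_id.const_mul_atTop hd)
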